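/- Let $h > 0$ and $b \in \mathbb{R}$, and suppose $a : (-\infty, t_{\max}) \to \mathbb{R}_{>0}$ is twice differentiable with, as $t \to -\infty$: $a(t) = e^{ht} + b e^{3ht} + o(e^{3ht})$, $\dot a(t) = h e^{ht} + 3hb e^{3ht} + o(e^{3ht})$, and $\ddot a(t) = h^2 e^{ht} + 9h^2 b e^{3ht} + o(e^{3ht})$. Then $\dot H(t)/a(t)^2 \to 4bh^2$ as $t \to -\infty$, where $H = \dot a/a$ and $\dot H = \ddot a/a - H^2$. -/

import Mathlib

open Real Filter

lemma flrw_alg (e h b p q r : ℝ) (he : e ≠ 0) (h1 : e + b*e^3 + p*e^3 ≠ 0) :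
    ((h^2*e + 9*h^2*b*e^3 + r*e^3) / (e + b*e^3 + p*e^3)
      - ((h*e + 3*h*b*e^3 + q*e^3) / (e + b*e^3 + p*e^3))^2) / (e + b*e^3 + p*e^3)^2
    = ((9*h^2*b + r) + h^2*(b + p) - 2*h*(3*h*b + q)
       + ((b + p)*(9*h^2*b + r) - (3*h*b + q)^2) * e^2) / (1 + (b + p)*e^2)^4 := by
  have h2 : 1 + (b+p)*e^2 ≠ 0 := by
    intro hc
    apply h1
    have hx : e + b*e^3 + p*e^3 = e*(1+(b+p)*e^2) := by ring
    rw [hx, hc, mul_zero]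
  field_simp
  ring

set_option maxHeartbeats 400000 in
theorem Hdot_over_a_sq_limit
    (a : ℝ → ℝ) (tmax h b : ℝ) (hh : 0 < h)
    (ha_diff : ∀ t ∈ Set.Iio tmax, DifferentiableAt ℝ a t)
    (ha_diff2 : ∀ t ∈ Set.Iio tmax, DifferentiableAt ℝ (deriv a) t)
    (ha_pos : ∀ t ∈ Set.Iio tmax, 0 < a t)
    (ha0 : Tendsto
      (fun t => (a t - (Real.exp (h * t) + b * Real.exp (3 * h * t))) /
        Real.exp (3 * h * t)) atBot (nhds 0))
    (ha1 : Tendsto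
      (fun t => (deriv a t - (h * Real.exp (h * t) + 3 * h * b * Real.exp (3 * h * t))) /
        Real.exp (3 * h * t)) atBot (nhds 0))
    (ha2 : Tendsto
      (fun t => (deriv (deriv a) t -
        (h ^ 2 * Real.exp (h * t) + 9 * h ^ 2 * b * Real.exp (3 * h * t))) /
        Real.exp (3 * h * t)) atBot (nhds 0)) :
    Tendsto
      (fun t => (deriv (deriv a) t / a t - (deriv a t / a t) ^ 2) / a t ^ 2)
      atBot (nhds (4 * b * h ^ 2)) := by
  set ε0 : ℝ → ℝ := fun t => (a t - (Real.exp (h * t) + b * Real.exp (3 * h * t))) /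
        Real.exp (3 * h * t) with hε0
  set ε1 : ℝ → ℝ := fun t => (deriv a t - (h * Real.exp (h * t) + 3 * h * b * Real.exp (3 * h * t))) /
        Real.exp (3 * h * t) with hε1
  set ε2 : ℝ → ℝ := fun t => (deriv (deriv a) t -
        (h ^ 2 * Real.exp (h * t) + 9 * h ^ 2 * b * Real.exp (3 * h * t))) /
        Real.exp (3 * h * t) with hε2
  have hu : Tendsto (fun t : ℝ => Real.exp (2 * h * t)) atBot (nhds 0) := by
    apply Real.tendsto_exp_atBot.comp
    exact Tendsto.const_mul_atBot (by linarith) tendsto_id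
  have key : Tendsto (fun t =>
      ((9*h^2*b + ε2 t) + h^2*(b + ε0 t) - 2*h*(3*h*b + ε1 t)
        + ((b + ε0 t)*(9*h^2*b + ε2 t) - (3*h*b + ε1 t)^2) * Real.exp (2*h*t))
      / (1 + (b + ε0 t)*Real.exp (2*h*t))^4) atBot (nhds (4*b*h^2)) := by
    have hnum : Tendsto (fun t =>
        (9*h^2*b + ε2 t) + h^2*(b + ε0 t) - 2*h*(3*h*b + ε1 t)
        + ((b + ε0 t)*(9*h^2*b + ε2 t) - (3*h*b + ε1 t)^2) * Real.exp (2*h*t)) atBot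
        (nhds ((9*h^2*b + 0) + h^2*(b + 0) - 2*h*(3*h*b + 0)
          + ((b + 0)*(9*h^2*b + 0) - (3*h*b + 0)^2) * 0)) := by
      exact (((tendsto_const_nhds.add ha2).add
        ((tendsto_const_nhds.add ha0).const_mul _)).sub
        ((tendsto_const_nhds.add ha1).const_mul _)).add
        ((((tendsto_const_nhds.add ha0).mul (tendsto_const_nhds.add ha2)).sub
          ((tendsto_const_nhds.add ha1).pow 2)).mul hu)
    have hden : Tendsto (fun t => (1 + (b + ε0 t)*Real.exp (2*h*t))^4) atBot
        (nhds ((1 + (b + 0) * 0)^4)) :=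
      (tendsto_const_nhds.add ((tendsto_const_nhds.add ha0).mul hu)).pow 4
    have := hnum.div hden (by norm_num)
    convert this using 2
    · rfl
    ring
  refine key.congr' ?_
  filter_upwards [eventually_lt_atBot tmax] with t ht
  have hE : Real.exp (h * t) ≠ 0 := Real.exp_ne_zero _
  have he3 : Real.exp (3 * h * t) = Real.exp (h * t) ^ 3 := by
    rw [show (3:ℝ) * h * t = h * t + h * t + h * t by ring, Real.exp_add, Real.exp_add]; ring
  have he2 : Real.exp (2 * h * t) = Real.exp (h * t) ^ 2 := by
    rw [show (2:ℝ) * h * t = h * t + h * t by ring, Real.exp_add]; ring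
  have ha : a t = Real.exp (h*t) + b * Real.exp (3*h*t) + ε0 t * Real.exp (3*h*t) := by
    rw [hε0]; field_simp; ring
  have hd1 : deriv a t = h * Real.exp (h*t) + 3*h*b * Real.exp (3*h*t) + ε1 t * Real.exp (3*h*t) := by
    rw [hε1]; field_simp; ring
  have hd2 : deriv (deriv a) t = h^2 * Real.exp (h*t) + 9*h^2*b * Real.exp (3*h*t) + ε2 t * Real.exp (3*h*t) := by
    rw [hε2]; field_simp; ring
  have hapos := ha_pos t ht
  have h1A : 0 < 1 + (b + ε0 t) * Real.exp (2*h*t) := by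
    have : a t = Real.exp (h*t) * (1 + (b + ε0 t) * Real.exp (2*h*t)) := by
      rw [ha, he3, he2]; ring
    nlinarith [Real.exp_pos (h*t), hapos]
  have hane : Real.exp (h*t) + b * Real.exp (3*h*t) + ε0 t * Real.exp (3*h*t) ≠ 0 := ha ▸ hapos.ne'
  rw [hd2, hd1, ha, he3, he2]
  rw [he3] at hane
  exact (flrw_alg (Real.exp (h*t)) h b (ε0 t) (ε1 t) (ε2 t) hE hane).symm
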